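/- Every leverage score of the smoothed matrix X* is at most 1/γ; that is, ℓ_j(X*) ≤ 1/γ for all j ∈ [n]. -/

import Mathlib

open Matrix

/-- `B` is the Moore–Penrose pseudoinverse of `M`. -/
def IsMoorePenrose {n : Type*} [Fintype n] (M B : Matrix n n ℝ) : Prop :=
  M * B * M = M ∧ B * M * B = B ∧ (M * B)ᵀ = M * B ∧ (B * M)ᵀ = B * M

/-- Uniqueness of the Moore–Penrose pseudoinverse. -/
lemma isMoorePenrose_unique {n : Type*} [Fintype n] (M B P : Matrix n n ℝ)
    (hB : IsMoorePenrose M B) (hP : IsMoorePenrose M P) : B = P := by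
  obtain ⟨hB1, hB2, hB3, hB4⟩ := hB
  obtain ⟨hP1, hP2, hP3, hP4⟩ := hP
  have h1 : M * B = M * P := by
    calc M * B = (M * B)ᵀ := hB3.symm
      _ = ((M * P * M) * B)ᵀ := by rw [hP1]
      _ = ((M * P) * (M * B))ᵀ := by simp only [Matrix.mul_assoc]
      _ = (M * B)ᵀ * (M * P)ᵀ := by rw [Matrix.transpose_mul]
      _ = (M * B) * (M * P) := by rw [hB3, hP3]
      _ = (M * B * M) * P := by simp only [Matrix.mul_assoc]
      _ = M * P := by rw [hB1]
  have h2 : B * M = P * M := by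
    calc B * M = (B * M)ᵀ := hB4.symm
      _ = (B * (M * P * M))ᵀ := by rw [hP1]
      _ = ((B * M) * (P * M))ᵀ := by simp only [Matrix.mul_assoc]
      _ = (P * M)ᵀ * (B * M)ᵀ := by rw [Matrix.transpose_mul]
      _ = (P * M) * (B * M) := by rw [hB4, hP4]
      _ = P * (M * B * M) := by simp only [Matrix.mul_assoc]
      _ = P * M := by rw [hB1]
  calc B = B * M * B := hB2.symm
    _ = P * M * B := by rw [h2]
    _ = P * (M * B) := by rw [Matrix.mul_assoc]
    _ = P * (M * P) := by rw [h1]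
    _ = P * M * P := by rw [Matrix.mul_assoc]
    _ = P := hP2

/-- Let `X` have rows of Euclidean norm at most 1, with SVD `X = U S Vᵀ`, and let
`Xs = U S' Vᵀ` be obtained by zeroing out all singular values below `√γ` (`γ > 0`).
Then every leverage score of `Xs`, namely `ℓⱼ(Xs) = Xs[j,:]ᵀ (Xsᵀ Xs)⁺ Xs[j,:]`,
is at most `1/γ`. -/
theorem leverage_scores_of_smoothed_le {n d : ℕ} (γ : ℝ) (hγ : 0 < γ)
    (X Xs : Matrix (Fin n) (Fin d) ℝ)
    (hrows : ∀ j, ∑ k, (X j k) ^ 2 ≤ 1)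
    (U : Matrix (Fin n) (Fin n) ℝ) (hU : U ∈ Matrix.orthogonalGroup (Fin n) ℝ)
    (V : Matrix (Fin d) (Fin d) ℝ) (hV : V ∈ Matrix.orthogonalGroup (Fin d) ℝ)
    (S S' : Matrix (Fin n) (Fin d) ℝ)
    (hSdiag : ∀ (i : Fin n) (j : Fin d), (i : ℕ) ≠ (j : ℕ) → S i j = 0)
    (hS' : ∀ i j, S' i j = if Real.sqrt γ ≤ S i j then S i j else 0)
    (hX : X = U * S * Vᵀ) (hXs : Xs = U * S' * Vᵀ)
    (B : Matrix (Fin d) (Fin d) ℝ) (hB : IsMoorePenrose (Xsᵀ * Xs) B)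
    (j : Fin n) :
    Xs j ⬝ᵥ B.mulVec (Xs j) ≤ 1 / γ := by
  -- Orthogonality facts
  have hUo : Uᵀ * U = 1 := by
    rw [Matrix.mem_orthogonalGroup_iff'] at hU; simpa using hU
  have hVo : Vᵀ * V = 1 := by
    rw [Matrix.mem_orthogonalGroup_iff'] at hV; simpa using hV
  have hVo' : V * Vᵀ = 1 := by
    rw [Matrix.mem_orthogonalGroup_iff] at hV; simpa using hV
  -- S' vanishes off the "diagonal"
  have hS'0 : ∀ (i : Fin n) (k : Fin d), (i : ℕ) ≠ (k : ℕ) → S' i k = 0 := by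
    intro i k h
    rw [hS', hSdiag i k h]
    simp
  -- collapsing sums against a "diagonal" rectangular matrix
  have hsum : ∀ (f : Fin n → ℝ) (W : Matrix (Fin n) (Fin d) ℝ)
      (_ : ∀ (i : Fin n) (k : Fin d), (i : ℕ) ≠ (k : ℕ) → W i k = 0) (k : Fin d),
      ∑ i, f i * W i k = if h : (k : ℕ) < n then f ⟨k, h⟩ * W ⟨k, h⟩ k else 0 := by
    intro f W hW k
    split
    · next h =>
      exact Finset.sum_eq_single_of_mem (f := fun i => f i * W i k) ⟨(k : ℕ), h⟩
        (Finset.mem_univ _)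
        (fun i _ hi => by
          show f i * W i k = 0
          rw [hW i k (by simpa [Fin.ext_iff] using hi), mul_zero])
    · next h =>
      apply Finset.sum_eq_zero
      intro i _
      rw [hW i k (by omega), mul_zero]
  -- the diagonal d×d matrix D = S'ᵀ S'
  set dvec : Fin d → ℝ := fun k => ∑ i, S' i k * S' i k with hdvec
  have hD : S'ᵀ * S' = Matrix.diagonal dvec := by
    ext k l
    rw [Matrix.mul_apply]
    by_cases hkl : k = l
    · subst hkl
      simp [Matrix.diagonal_apply_eq, hdvec, Matrix.transpose_apply]
    · rw [Matrix.diagonal_apply_ne _ hkl]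
      apply Finset.sum_eq_zero
      intro i _
      rcases eq_or_ne (i : ℕ) (k : ℕ) with h | h
      · rw [Matrix.transpose_apply, hS'0 i l (by simp [Fin.ext_iff] at hkl; omega), mul_zero]
      · rw [Matrix.transpose_apply, hS'0 i k h, zero_mul]
  -- candidate pseudoinverse
  set e : Fin d → ℝ := fun k => if dvec k = 0 then 0 else (dvec k)⁻¹ with he
  set P : Matrix (Fin d) (Fin d) ℝ := V * Matrix.diagonal e * Vᵀ with hP
  have hconj : ∀ G H : Matrix (Fin d) (Fin d) ℝ,
      (V * G * Vᵀ) * (V * H * Vᵀ) = V * (G * H) * Vᵀ := by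
    intro G H
    calc (V * G * Vᵀ) * (V * H * Vᵀ) = V * (G * ((Vᵀ * V) * (H * Vᵀ))) := by
          simp only [Matrix.mul_assoc]
      _ = V * (G * (H * Vᵀ)) := by rw [hVo, Matrix.one_mul]
      _ = V * (G * H) * Vᵀ := by simp only [Matrix.mul_assoc]
  have hconjT : ∀ G : Matrix (Fin d) (Fin d) ℝ, (V * G * Vᵀ)ᵀ = V * Gᵀ * Vᵀ := by
    intro G
    rw [Matrix.transpose_mul, Matrix.transpose_mul, Matrix.transpose_transpose]
    simp only [Matrix.mul_assoc]
  have hM : Xsᵀ * Xs = V * Matrix.diagonal dvec * Vᵀ := by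
    rw [hXs, Matrix.transpose_mul, Matrix.transpose_mul, Matrix.transpose_transpose]
    calc V * (S'ᵀ * Uᵀ) * (U * S' * Vᵀ) = V * (S'ᵀ * ((Uᵀ * U) * (S' * Vᵀ))) := by
          simp only [Matrix.mul_assoc]
      _ = V * (S'ᵀ * (S' * Vᵀ)) := by rw [hUo, Matrix.one_mul]
      _ = V * ((S'ᵀ * S') * Vᵀ) := by simp only [Matrix.mul_assoc]
      _ = V * Matrix.diagonal dvec * Vᵀ := by rw [hD, Matrix.mul_assoc]
  have hde : Matrix.diagonal dvec * Matrix.diagonal e * Matrix.diagonal dvec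
      = Matrix.diagonal dvec := by
    rw [Matrix.diagonal_mul_diagonal, Matrix.diagonal_mul_diagonal]
    refine congrArg Matrix.diagonal (funext fun k => ?_)
    by_cases h : dvec k = 0
    · simp [he, h]
    · simp only [he, if_neg h]; field_simp
  have hed : Matrix.diagonal e * Matrix.diagonal dvec * Matrix.diagonal e
      = Matrix.diagonal e := by
    rw [Matrix.diagonal_mul_diagonal, Matrix.diagonal_mul_diagonal]
    refine congrArg Matrix.diagonal (funext fun k => ?_)
    by_cases h : dvec k = 0
    · simp [he, h]
    · simp only [he, if_neg h]; field_simp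
  have hsymm1 : (Matrix.diagonal dvec * Matrix.diagonal e)ᵀ
      = Matrix.diagonal dvec * Matrix.diagonal e := by
    rw [Matrix.diagonal_mul_diagonal, Matrix.diagonal_transpose]
  have hsymm2 : (Matrix.diagonal e * Matrix.diagonal dvec)ᵀ
      = Matrix.diagonal e * Matrix.diagonal dvec := by
    rw [Matrix.diagonal_mul_diagonal, Matrix.diagonal_transpose]
  have hPmp : IsMoorePenrose (Xsᵀ * Xs) P := by
    rw [hM, hP]
    refine ⟨?_, ?_, ?_, ?_⟩
    · rw [hconj, hconj, hde]
    · rw [hconj, hconj, hed]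
    · rw [hconj, hconjT, hsymm1]
    · rw [hconj, hconjT, hsymm2]
  have hBP : B = P := isMoorePenrose_unique _ B P hB hPmp
  -- quadratic form computation
  have hXsV : Xs * V = U * S' := by
    rw [hXs]
    calc U * S' * Vᵀ * V = U * (S' * (Vᵀ * V)) := by simp only [Matrix.mul_assoc]
      _ = U * S' := by rw [hVo, Matrix.mul_one]
  have hy : (Xs j) ᵥ* V = (U * S') j := by
    funext k
    have h1 : ((Xs * V) j) k = ((U * S') j) k := by rw [hXsV]
    simpa [Matrix.mul_apply, Matrix.vecMul, dotProduct] using h1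
  have hq : Xs j ⬝ᵥ P.mulVec (Xs j) = ∑ k, (U * S') j k * (e k * (U * S') j k) := by
    rw [hP, show V * Matrix.diagonal e * Vᵀ = V * (Matrix.diagonal e * Vᵀ) from
      Matrix.mul_assoc _ _ _, ← Matrix.mulVec_mulVec, Matrix.dotProduct_mulVec,
      ← Matrix.mulVec_mulVec, Matrix.mulVec_transpose, hy]
    simp [dotProduct, Matrix.mulVec_diagonal]
  -- entrywise bound
  have hterm : ∀ k : Fin d,
      (U * S') j k * (e k * (U * S') j k) ≤ γ⁻¹ * ((U * S) j k) ^ 2 := by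
    intro k
    have hUS' : (U * S') j k = if h : (k : ℕ) < n then U j ⟨k, h⟩ * S' ⟨k, h⟩ k else 0 := by
      rw [Matrix.mul_apply]; exact hsum (U j) S' hS'0 k
    have hUS : (U * S) j k = if h : (k : ℕ) < n then U j ⟨k, h⟩ * S ⟨k, h⟩ k else 0 := by
      rw [Matrix.mul_apply]; exact hsum (U j) S hSdiag k
    have hdk : dvec k = if h : (k : ℕ) < n then S' ⟨k, h⟩ k * S' ⟨k, h⟩ k else 0 :=
      hsum (fun i => S' i k) S' hS'0 k
    by_cases h : (k : ℕ) < n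
    · rw [dif_pos h] at hUS' hUS hdk
      set i0 : Fin n := ⟨k, h⟩
      by_cases hz : S' i0 k = 0
      · rw [hUS', hz, mul_zero, zero_mul]
        positivity
      · have hge : Real.sqrt γ ≤ S i0 k := by
          by_contra hc
          rw [hS', if_neg hc] at hz
          exact hz rfl
        have hSe : S' i0 k = S i0 k := by rw [hS', if_pos hge]
        have hγle : γ ≤ S i0 k * S i0 k := by
          nlinarith [Real.sq_sqrt hγ.le, Real.sqrt_nonneg γ, sq_nonneg (S i0 k - Real.sqrt γ)]
        have hdk0 : dvec k ≠ 0 := by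
          rw [hdk, hSe]
          nlinarith
        have hek : e k = (S i0 k * S i0 k)⁻¹ := by
          rw [he]
          simp only [if_neg hdk0]
          rw [hdk, hSe]
        have hinv : (S i0 k * S i0 k)⁻¹ ≤ γ⁻¹ := inv_anti₀ hγ hγle
        rw [hUS', hUS, hSe, hek]
        have hsq : (0:ℝ) ≤ (U j i0 * S i0 k) ^ 2 := sq_nonneg _
        rw [show U j i0 * S i0 k * ((S i0 k * S i0 k)⁻¹ * (U j i0 * S i0 k))
            = (S i0 k * S i0 k)⁻¹ * (U j i0 * S i0 k) ^ 2 from by ring]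
        exact mul_le_mul_of_nonneg_right hinv hsq
    · rw [hUS', dif_neg h, zero_mul]
      positivity
  -- row norm bound
  have hXV : X * V = U * S := by
    rw [hX]
    calc U * S * Vᵀ * V = U * (S * (Vᵀ * V)) := by simp only [Matrix.mul_assoc]
      _ = U * S := by rw [hVo, Matrix.mul_one]
  have hrownorm : ∑ k, ((U * S) j k) ^ 2 ≤ 1 := by
    rw [← hXV]
    have h1 : ((X * V) * (X * V)ᵀ) j j = ∑ k, ((X * V) j k) ^ 2 := by
      rw [Matrix.mul_apply]
      exact Finset.sum_congr rfl fun k _ => by rw [Matrix.transpose_apply, sq]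
    have h2 : (X * V) * (X * V)ᵀ = X * Xᵀ := by
      rw [Matrix.transpose_mul]
      calc X * V * (Vᵀ * Xᵀ) = X * ((V * Vᵀ) * Xᵀ) := by simp only [Matrix.mul_assoc]
        _ = X * Xᵀ := by rw [hVo', Matrix.one_mul]
    have h3 : (X * Xᵀ) j j = ∑ k, (X j k) ^ 2 := by
      rw [Matrix.mul_apply]
      exact Finset.sum_congr rfl fun k _ => by rw [Matrix.transpose_apply, sq]
    rw [← h1, h2, h3]
    exact hrows j
  rw [hBP, hq]
  calc ∑ k, (U * S') j k * (e k * (U * S') j k)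
      ≤ ∑ k, γ⁻¹ * ((U * S) j k) ^ 2 := Finset.sum_le_sum fun k _ => hterm k
    _ = γ⁻¹ * ∑ k, ((U * S) j k) ^ 2 := by rw [Finset.mul_sum]
    _ ≤ γ⁻¹ * 1 := mul_le_mul_of_nonneg_left hrownorm (inv_nonneg.mpr hγ.le)
    _ = 1 / γ := by rw [mul_one, one_div]
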